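/- First moment of the refined isolated-node indicators: In the homogeneous binary MAG model M(n;L), for every node u ∈ {1,…,n} and every ℓ ∈ {0,1,…,L}, the probability that node u is isolated and S_L(u) = ℓ equals (1 − Γ(1)^ℓ Γ(0)^{L−ℓ})^{n−1} · C(L,ℓ) μ(1)^ℓ μ(0)^{L−ℓ}. Consequently, E[I_n^{(ℓ)}(L)] = n (1 − Γ(1)^ℓ Γ(0)^{L−ℓ})^{n−1} C(L,ℓ) μ(1)^ℓ μ(0)^{L−ℓ}. -/

import Mathlib

open MeasureTheory Filter

/-- Bernoulli measure on `Bool` with parameter `p` = probability of `true`. -/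
noncomputable def bern (p : ℝ) : Measure Bool :=
  (Real.toNNReal p) • Measure.dirac true + (Real.toNNReal (1 - p)) • Measure.dirac false

/-- Uniform distribution on `[0,1]`. -/
noncomputable def unif01 : Measure ℝ := MeasureTheory.volume.restrict (Set.Icc (0:ℝ) 1)

/-- The probability space of the homogeneous binary MAG model `M(n;L)`:
i.i.d. Bernoulli attribute bits and, independently, i.i.d. Uniform(0,1) variables. -/
noncomputable def magMeasure (n L : ℕ) (p : ℝ) :
    Measure ((Fin n → Fin L → Bool) × (Fin n × Fin n → ℝ)) :=
  (Measure.pi fun _ : Fin n => Measure.pi fun _ : Fin L => bern p).prod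
    (Measure.pi fun _ : Fin n × Fin n => unif01)

/-- `Q_L(a,b) = ∏_{ℓ} q(a_ℓ, b_ℓ)`. -/
def QL {L : ℕ} (q : Bool → Bool → ℝ) (a b : Fin L → Bool) : ℝ :=
  ∏ ℓ : Fin L, q (a ℓ) (b ℓ)

/-- Distinct nodes `u, v` are adjacent iff `U(u,v) ≤ Q_L(A(u),A(v))`, where the uniform
variable attached to the unordered pair `{u,v}` is the one indexed by `(min u v, max u v)`. -/
def Adj {n L : ℕ} (q : Bool → Bool → ℝ)
    (ω : (Fin n → Fin L → Bool) × (Fin n × Fin n → ℝ)) (u v : Fin n) : Prop :=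
  u ≠ v ∧ ω.2 (min u v, max u v) ≤ QL q (ω.1 u) (ω.1 v)

/-- Node `u` is isolated if it is adjacent to no other node. -/
def Isolated {n L : ℕ} (q : Bool → Bool → ℝ)
    (ω : (Fin n → Fin L → Bool) × (Fin n × Fin n → ℝ)) (u : Fin n) : Prop :=
  ∀ v, ¬ Adj q ω u v

/-- `S_L(u)`: the number of attributes exhibited by node `u`. -/
def Scount {n L : ℕ} (ω : (Fin n → Fin L → Bool) × (Fin n × Fin n → ℝ)) (u : Fin n) : ℕ :=
  (Finset.univ.filter fun ℓ : Fin L => ω.1 u ℓ = true).card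

open scoped Classical in
/-- `I_n(L)`: the number of isolated nodes. -/
noncomputable def numIsolated {n L : ℕ} (q : Bool → Bool → ℝ)
    (ω : (Fin n → Fin L → Bool) × (Fin n × Fin n → ℝ)) : ℕ :=
  (Finset.univ.filter fun u : Fin n => Isolated q ω u).card

open scoped Classical in
/-- `I_n^{(k)}(L)`: the number of isolated nodes `u` with `S_L(u) = k`. -/
noncomputable def numIsolatedWith {n L : ℕ} (q : Bool → Bool → ℝ) (k : ℕ)
    (ω : (Fin n → Fin L → Bool) × (Fin n × Fin n → ℝ)) : ℕ :=
  (Finset.univ.filter fun u : Fin n => Isolated q ω u ∧ Scount ω u = k).card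

open scoped Classical in
/-- `ξ^{(k)}(u)`: the indicator that node `u` is isolated and `S_L(u) = k`. -/
noncomputable def xiInd {n L : ℕ} (q : Bool → Bool → ℝ) (k : ℕ)
    (ω : (Fin n → Fin L → Bool) × (Fin n × Fin n → ℝ)) (u : Fin n) : ℝ :=
  if Isolated q ω u ∧ Scount ω u = k then 1 else 0

/-- `Γ(a) = μ(0) q(a,0) + μ(1) q(a,1)`, with `μ(1) = μ1`, `μ(0) = 1 - μ1`. -/
def Gam (μ1 : ℝ) (q : Bool → Bool → ℝ) (a : Bool) : ℝ :=
  (1 - μ1) * q a false + μ1 * q a true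

/-- A scaling `L : ℕ → ℕ` is `ρ`-admissible if `L_n ~ ρ ln n` as `n → ∞`. -/
def Admissible (ρ : ℝ) (L : ℕ → ℕ) : Prop :=
  Asymptotics.IsEquivalent Filter.atTop (fun n => (L n : ℝ)) (fun n => ρ * Real.log n)

/-- `G(ν,μ) = (μ/ν)^ν ((1-μ)/(1-ν))^{1-ν}` (real powers; the conventions at `ν = 0,1`
agree with the continuous extension). -/
noncomputable def Gfun (ν μ : ℝ) : ℝ :=
  (μ / ν) ^ ν * ((1 - μ) / (1 - ν)) ^ (1 - ν)

/-- `Q*_L(a) = E[Q_L(a,A)]`, `A` a vector of `L` i.i.d. Bernoulli(μ1) bits. -/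
noncomputable def Qstar {L : ℕ} (μ1 : ℝ) (q : Bool → Bool → ℝ) (a : Fin L → Bool) : ℝ :=
  ∫ b, QL q a b ∂(Measure.pi fun _ : Fin L => bern μ1)

/-- `Q**_L(a,b) = E[Q_L(a,A) Q_L(b,A)]`. -/
noncomputable def Qstarstar {L : ℕ} (μ1 : ℝ) (q : Bool → Bool → ℝ) (a b : Fin L → Bool) : ℝ :=
  ∫ c, QL q a c * QL q b c ∂(Measure.pi fun _ : Fin L => bern μ1)

/-- `Q̃_L(a,b) = Q*_L(a) + Q*_L(b) − Q**_L(a,b)`. -/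
noncomputable def Qtilde {L : ℕ} (μ1 : ℝ) (q : Bool → Bool → ℝ) (a b : Fin L → Bool) : ℝ :=
  Qstar μ1 q a + Qstar μ1 q b - Qstarstar μ1 q a b





/-- weight -/
def wgt (p : ℝ) (b : Bool) : ℝ := if b then p else 1 - p

lemma bern_apply (p : ℝ) (b : Bool) : bern p {b} = ENNReal.ofReal (wgt p b) := by
  have h : ∀ s : Set Bool, MeasurableSet s := fun s => trivial
  have e : ∀ r : ℝ, (↑r.toNNReal : ENNReal) = ENNReal.ofReal r := fun _ => rfl
  cases b <;>
    simp [bern, Measure.dirac_apply' _ (h _), wgt, Set.indicator, Measure.add_apply,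
      ENNReal.smul_def, e]

instance (p : ℝ) : IsFiniteMeasure (bern p) := by
  constructor
  have h : MeasurableSet (Set.univ : Set Bool) := trivial
  show ((Real.toNNReal p) • Measure.dirac true + (Real.toNNReal (1 - p)) • Measure.dirac false) Set.univ < ⊤
  exact measure_lt_top _ _

lemma bern_univ (p : ℝ) (h0 : 0 ≤ p) (h1 : p ≤ 1) : bern p Set.univ = 1 := by
  have h : MeasurableSet (Set.univ : Set Bool) := trivial
  rw [bern]
  have e : ∀ r : ℝ, (↑r.toNNReal : ENNReal) = ENNReal.ofReal r := fun _ => rfl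
  simp [Measure.dirac_apply' _ h, Set.indicator, ENNReal.smul_def, e]
  rw [← ENNReal.ofReal_add h0 (by linarith)]
  norm_num

instance : IsProbabilityMeasure unif01 := by
  constructor
  rw [unif01, Measure.restrict_apply MeasurableSet.univ]
  simp [Real.volume_Icc]

lemma unif01_Ioi (t : ℝ) (h0 : 0 ≤ t) (h1 : t ≤ 1) :
    unif01 (Set.Ioi t) = ENNReal.ofReal (1 - t) := by
  rw [unif01, Measure.restrict_apply measurableSet_Ioi]
  have : Set.Ioi t ∩ Set.Icc 0 1 = Set.Ioc t 1 := by
    ext x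
    simp only [Set.mem_inter_iff, Set.mem_Ioi, Set.mem_Icc, Set.mem_Ioc]
    constructor
    · rintro ⟨h, _, h2⟩; exact ⟨h, h2⟩
    · rintro ⟨h, h2⟩; exact ⟨h, le_of_lt (lt_of_le_of_lt h0 h), h2⟩
  rw [this, Real.volume_Ioc]

lemma piBern_single {L : ℕ} (p : ℝ) (a : Fin L → Bool) :
    (Measure.pi fun _ : Fin L => bern p) {a} = ∏ j : Fin L, ENNReal.ofReal (wgt p (a j)) := by
  have : ({a} : Set (Fin L → Bool)) = Set.univ.pi fun j => {a j} := by
    ext b; simp [funext_iff, Set.mem_pi]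
  rw [this, Measure.pi_pi]
  exact Finset.prod_congr rfl fun j _ => bern_apply p (a j)

lemma attr_single {n L : ℕ} (p : ℝ) (a : Fin n → Fin L → Bool) :
    (Measure.pi fun _ : Fin n => Measure.pi fun _ : Fin L => bern p) {a}
      = ∏ v : Fin n, ∏ j : Fin L, ENNReal.ofReal (wgt p (a v j)) := by
  have : ({a} : Set (Fin n → Fin L → Bool)) = Set.univ.pi fun v => {a v} := by
    ext b; simp [funext_iff, Set.mem_pi]
  rw [this, Measure.pi_pi]
  exact Finset.prod_congr rfl fun v _ => piBern_single p (a v)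

lemma sect_measure {n : ℕ} (u : Fin n) (t : Fin n → ℝ)
    (ht0 : ∀ v, 0 ≤ t v) (ht1 : ∀ v, t v ≤ 1) :
    (Measure.pi fun _ : Fin n × Fin n => unif01)
      {U : Fin n × Fin n → ℝ | ∀ v, v ≠ u → t v < U (min u v, max u v)}
      = ∏ v ∈ Finset.univ.erase u, ENNReal.ofReal (1 - t v) := by
  classical
  set e : Fin n → Fin n × Fin n := fun v => (min u v, max u v) with he
  set g : Fin n × Fin n → Set ℝ := fun i => {x | ∀ v, v ≠ u → e v = i → t v < x} with hgdef
  have hinj : ∀ v v', v ≠ u → v' ≠ u → e v = e v' → v = v' := by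
    intro v v' hv hv' h
    have h1 := congrArg Prod.fst h
    have h2 := congrArg Prod.snd h
    simp only [he] at h1 h2
    rcases le_total u v with h3 | h3 <;> rcases le_total u v' with h4 | h4
    · rw [max_eq_right h3, max_eq_right h4] at h2; exact h2
    · rw [min_eq_left h3, min_eq_right h4] at h1; exact absurd h1.symm hv'
    · rw [min_eq_right h3, min_eq_left h4] at h1; exact absurd h1 hv
    · rw [min_eq_right h3, min_eq_right h4] at h1; exact h1
  have hS : {U : Fin n × Fin n → ℝ | ∀ v, v ≠ u → t v < U (min u v, max u v)}
      = Set.univ.pi g := by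
    ext U
    simp only [Set.mem_setOf_eq, Set.mem_pi, Set.mem_univ, forall_true_left, hgdef]
    constructor
    · intro h i v hv hev; subst hev; exact h v hv
    · intro h v hv; exact h (e v) v hv rfl
  have hg : ∀ i, MeasurableSet (g i) := by
    intro i
    have : g i = ⋂ v : Fin n, {x | v ≠ u → e v = i → t v < x} := by
      ext x; simp [hgdef, Set.mem_iInter]
    rw [this]
    refine MeasurableSet.iInter fun v => ?_
    by_cases hv : v ≠ u ∧ e v = i
    · have : {x : ℝ | v ≠ u → e v = i → t v < x} = Set.Ioi (t v) := by
        ext x; simp [hv.1, hv.2]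
      rw [this]; exact measurableSet_Ioi
    · have : {x : ℝ | v ≠ u → e v = i → t v < x} = Set.univ := by
        ext x; simp only [Set.mem_setOf_eq, Set.mem_univ, iff_true]
        intro h1 h2; exact absurd ⟨h1, h2⟩ hv
      rw [this]; exact MeasurableSet.univ
  rw [hS, Measure.pi_pi]
  have hsub : (Finset.univ.erase u).image e ⊆ Finset.univ := Finset.subset_univ _
  rw [← Finset.prod_subset hsub ?_]
  · rw [Finset.prod_image ?_]
    · refine Finset.prod_congr rfl fun v hv => ?_
      have hvne : v ≠ u := Finset.ne_of_mem_erase hv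
      have : g (e v) = Set.Ioi (t v) := by
        ext x
        simp only [hgdef, Set.mem_setOf_eq, Set.mem_Ioi]
        constructor
        · intro h; exact h v hvne rfl
        · intro h v' hv' hev'
          have := hinj v' v hv' hvne hev'
          subst this; exact h
      rw [this, unif01_Ioi (t v) (ht0 v) (ht1 v)]
    · intro x hx y hy hxy
      exact hinj x y (Finset.ne_of_mem_erase hx) (Finset.ne_of_mem_erase hy) hxy
  · intro i _ hi
    have : g i = Set.univ := by
      ext x; simp only [hgdef, Set.mem_setOf_eq, Set.mem_univ, iff_true]
      intro v hv hev
      exact absurd (Finset.mem_image.2 ⟨v, Finset.mem_erase.2 ⟨hv, Finset.mem_univ v⟩, hev⟩) hi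
    rw [this]
    exact measure_univ





lemma wgt_true (p : ℝ) : wgt p true = p := rfl
lemma wgt_false (p : ℝ) : wgt p false = 1 - p := rfl

def cnt {L : ℕ} (b : Fin L → Bool) : ℕ := (Finset.univ.filter fun j => b j = true).card

lemma cnt_le {L : ℕ} (b : Fin L → Bool) : cnt b ≤ L := by
  simpa [cnt] using Finset.card_filter_le Finset.univ (fun j => b j = true)

lemma prod_wgt {L : ℕ} (μ1 : ℝ) (b : Fin L → Bool) :
    ∏ j : Fin L, wgt μ1 (b j) = μ1 ^ cnt b * (1 - μ1) ^ (L - cnt b) := by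
  classical
  rw [← Finset.prod_filter_mul_prod_filter_not Finset.univ (fun j => b j = true)]
  have h1 : ∏ j ∈ Finset.univ.filter fun j => b j = true, wgt μ1 (b j) = μ1 ^ cnt b := by
    rw [Finset.prod_congr rfl (fun j hj => ?_), Finset.prod_const, cnt]
    · rw [(Finset.mem_filter.1 hj).2]; rfl
  have h2 : ∏ j ∈ Finset.univ.filter fun j => ¬ b j = true, wgt μ1 (b j)
      = (1 - μ1) ^ (L - cnt b) := by
    rw [Finset.prod_congr rfl (fun j hj => ?_), Finset.prod_const]
    · congr 1
      have := Finset.card_filter_add_card_filter_not (s := Finset.univ)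
        (p := fun j : Fin L => b j = true)
      simp only [Finset.card_univ, Fintype.card_fin] at this
      rw [cnt]; omega
    · have := (Finset.mem_filter.1 hj).2
      simp only [Bool.not_eq_true] at this
      rw [this]; rfl
  rw [h1, h2]

lemma prod_gam {L : ℕ} (μ1 : ℝ) (q : Bool → Bool → ℝ) (b : Fin L → Bool) :
    ∏ j : Fin L, Gam μ1 q (b j)
      = Gam μ1 q true ^ cnt b * Gam μ1 q false ^ (L - cnt b) := by
  classical
  rw [← Finset.prod_filter_mul_prod_filter_not Finset.univ (fun j => b j = true)]
  have h1 : ∏ j ∈ Finset.univ.filter fun j => b j = true, Gam μ1 q (b j)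
      = Gam μ1 q true ^ cnt b := by
    rw [Finset.prod_congr rfl (fun j hj => ?_), Finset.prod_const, cnt]
    · rw [(Finset.mem_filter.1 hj).2]
  have h2 : ∏ j ∈ Finset.univ.filter fun j => ¬ b j = true, Gam μ1 q (b j)
      = Gam μ1 q false ^ (L - cnt b) := by
    rw [Finset.prod_congr rfl (fun j hj => ?_), Finset.prod_const]
    · congr 1
      have := Finset.card_filter_add_card_filter_not (s := Finset.univ)
        (p := fun j : Fin L => b j = true)
      simp only [Finset.card_univ, Fintype.card_fin] at this
      rw [cnt]; omega
    · have := (Finset.mem_filter.1 hj).2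
      simp only [Bool.not_eq_true] at this
      rw [this]
  rw [h1, h2]

lemma sum_wgt_one {L : ℕ} (μ1 : ℝ) :
    ∑ c : Fin L → Bool, ∏ j : Fin L, wgt μ1 (c j) = 1 := by
  classical
  calc ∑ c : Fin L → Bool, ∏ j : Fin L, wgt μ1 (c j)
      = ∑ c ∈ Fintype.piFinset fun _ : Fin L => (Finset.univ : Finset Bool),
          ∏ j : Fin L, wgt μ1 (c j) := by rw [Fintype.piFinset_univ]
    _ = ∏ j : Fin L, ∑ x ∈ Finset.univ, wgt μ1 x :=
        (Finset.prod_univ_sum (fun _ => (Finset.univ : Finset Bool))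
          (fun _ x => wgt μ1 x)).symm
    _ = ∏ j : Fin L, (1:ℝ) := Finset.prod_congr rfl fun j _ => by simp [wgt]
    _ = 1 := Finset.prod_const_one

lemma sum_wgt_QL {L : ℕ} (μ1 : ℝ) (q : Bool → Bool → ℝ) (b : Fin L → Bool) :
    ∑ c : Fin L → Bool, (∏ j : Fin L, wgt μ1 (c j)) * QL q b c
      = Gam μ1 q true ^ cnt b * Gam μ1 q false ^ (L - cnt b) := by
  classical
  rw [← prod_gam μ1 q b]
  have h1 : ∀ c : Fin L → Bool, (∏ j : Fin L, wgt μ1 (c j)) * QL q b c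
      = ∏ j : Fin L, wgt μ1 (c j) * q (b j) (c j) := by
    intro c; rw [QL, ← Finset.prod_mul_distrib]
  calc ∑ c : Fin L → Bool, (∏ j : Fin L, wgt μ1 (c j)) * QL q b c
      = ∑ c ∈ Fintype.piFinset fun _ : Fin L => (Finset.univ : Finset Bool),
          ∏ j : Fin L, wgt μ1 (c j) * q (b j) (c j) := by
        rw [Fintype.piFinset_univ]; exact Finset.sum_congr rfl fun c _ => h1 c
    _ = ∏ j : Fin L, ∑ x ∈ Finset.univ, wgt μ1 x * q (b j) x :=
        (Finset.prod_univ_sum (fun _ => (Finset.univ : Finset Bool))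
          (fun j x => wgt μ1 x * q (b j) x)).symm
    _ = ∏ j : Fin L, Gam μ1 q (b j) := by
        refine Finset.prod_congr rfl fun j _ => ?_
        rw [Fintype.sum_bool]
        rw [wgt_true, wgt_false, Gam]
        ring

lemma card_cnt (L ℓ : ℕ) :
    (Finset.univ.filter fun b : Fin L → Bool => cnt b = ℓ).card = L.choose ℓ := by
  classical
  have hL : L.choose ℓ = (Finset.univ : Finset (Fin L)).card.choose ℓ := by
    simp
  rw [hL, ← Finset.card_powersetCard ℓ (Finset.univ : Finset (Fin L))]
  · refine Finset.card_bij' (fun b _ => Finset.univ.filter fun j => b j = true)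
      (fun s _ => fun j => decide (j ∈ s)) ?_ ?_ ?_ ?_
    · intro b hb
      rw [Finset.mem_powersetCard]
      exact ⟨Finset.subset_univ _, (Finset.mem_filter.1 hb).2⟩
    · intro s hs
      rw [Finset.mem_filter]
      refine ⟨Finset.mem_univ _, ?_⟩
      rw [Finset.mem_powersetCard] at hs
      have hset : (Finset.univ.filter fun j => decide (j ∈ s) = true) = s := by
        ext j; simp
      rw [cnt, hset, hs.2]
    · intro b hb
      ext j; simp
    · intro s hs
      ext j; simp

lemma card_ne (n : ℕ) (u : Fin n) : Fintype.card {v : Fin n // v ≠ u} = n - 1 := by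
  have := Fintype.card_subtype_compl (fun v : Fin n => v = u)
  simpa [Fintype.card_subtype_eq] using this

lemma real_key (n L : ℕ) (μ1 : ℝ) (q : Bool → Bool → ℝ) (u : Fin n) (ℓ : ℕ) :
    ∑ a ∈ Finset.univ.filter (fun a : Fin n → Fin L → Bool => cnt (a u) = ℓ),
      (∏ v : Fin n, ∏ j : Fin L, wgt μ1 (a v j))
        * ∏ v ∈ Finset.univ.erase u, (1 - QL q (a u) (a v))
    = (1 - Gam μ1 q true ^ ℓ * Gam μ1 q false ^ (L - ℓ)) ^ (n - 1)
        * (L.choose ℓ) * μ1 ^ ℓ * (1 - μ1) ^ (L - ℓ) := by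
  classical
  set K : ℝ := 1 - Gam μ1 q true ^ ℓ * Gam μ1 q false ^ (L - ℓ) with hK
  set F : (Fin n → Fin L → Bool) → ℝ := fun a =>
    if cnt (a u) = ℓ then
      (∏ v : Fin n, ∏ j : Fin L, wgt μ1 (a v j))
        * ∏ v ∈ Finset.univ.erase u, (1 - QL q (a u) (a v))
    else 0 with hF
  have e := (Equiv.funSplitAt u (Fin L → Bool)).symm
  rw [Finset.sum_filter]
  have hcomp := Equiv.sum_comp (Equiv.funSplitAt u (Fin L → Bool)).symm F
  rw [show (∑ a : Fin n → Fin L → Bool,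
      if cnt (a u) = ℓ then
        (∏ v : Fin n, ∏ j : Fin L, wgt μ1 (a v j))
          * ∏ v ∈ Finset.univ.erase u, (1 - QL q (a u) (a v))
      else 0) = ∑ a : Fin n → Fin L → Bool, F a from rfl, ← hcomp]
  rw [Fintype.sum_prod_type]
  -- pointwise evaluation facts
  have h_u : ∀ (b : Fin L → Bool) (f : {v : Fin n // v ≠ u} → Fin L → Bool),
      (Equiv.funSplitAt u (Fin L → Bool)).symm (b, f) u = b := by
    intro b f
    simp [Equiv.funSplitAt, Equiv.piSplitAt]
  have h_v : ∀ (b : Fin L → Bool) (f : {v : Fin n // v ≠ u} → Fin L → Bool)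
      (v : Fin n) (hv : v ≠ u),
      (Equiv.funSplitAt u (Fin L → Bool)).symm (b, f) v = f ⟨v, hv⟩ := by
    intro b f v hv
    simp [Equiv.funSplitAt, Equiv.piSplitAt, hv]
  have hstep : ∀ b : Fin L → Bool,
      (∑ f : {v : Fin n // v ≠ u} → Fin L → Bool,
        F ((Equiv.funSplitAt u (Fin L → Bool)).symm (b, f)))
      = if cnt b = ℓ then (∏ j : Fin L, wgt μ1 (b j)) * K ^ (n - 1) else 0 := by
    intro b
    have hFval : ∀ f : {v : Fin n // v ≠ u} → Fin L → Bool,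
        F ((Equiv.funSplitAt u (Fin L → Bool)).symm (b, f))
        = if cnt b = ℓ then
            (∏ j : Fin L, wgt μ1 (b j)) *
              ∏ v' : {v : Fin n // v ≠ u},
                ((∏ j : Fin L, wgt μ1 (f v' j)) * (1 - QL q b (f v')))
          else 0 := by
      intro f
      set a := (Equiv.funSplitAt u (Fin L → Bool)).symm (b, f) with ha
      have hau : a u = b := h_u b f
      have hav : ∀ (v : Fin n) (hv : v ≠ u), a v = f ⟨v, hv⟩ := h_v b f
      rw [hF]
      simp only [hau]
      by_cases hc : cnt b = ℓ
      · rw [if_pos hc, if_pos hc]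
        have h1 : (∏ v : Fin n, ∏ j : Fin L, wgt μ1 (a v j))
            = (∏ j : Fin L, wgt μ1 (b j))
              * ∏ v ∈ Finset.univ.erase u, ∏ j : Fin L, wgt μ1 (a v j) := by
          rw [← Finset.mul_prod_erase Finset.univ _ (Finset.mem_univ u), hau]
        have hsub : ∀ g : Fin n → ℝ, ∏ v ∈ Finset.univ.erase u, g v
            = ∏ v' : {v : Fin n // v ≠ u}, g v'.1 := by
          intro g
          exact Finset.prod_subtype _ (fun x => by simp) g
        rw [h1, hsub, hsub, mul_assoc, ← Finset.prod_mul_distrib]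
        congr 1
        refine Finset.prod_congr rfl fun v' _ => ?_
        rw [show a v'.1 = f v' from by rw [hav v'.1 v'.2]]
      · rw [if_neg hc, if_neg hc]
    rw [Finset.sum_congr rfl fun f _ => hFval f]
    by_cases hc : cnt b = ℓ
    · simp only [if_pos hc, ← Finset.mul_sum]
      congr 1
      have : ∀ c : Fin L → Bool,
          (∏ j : Fin L, wgt μ1 (c j)) * (1 - QL q b c)
          = (∏ j : Fin L, wgt μ1 (c j)) - (∏ j : Fin L, wgt μ1 (c j)) * QL q b c := by
        intro c; ring
      calc ∑ f : {v : Fin n // v ≠ u} → Fin L → Bool,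
            ∏ v' : {v : Fin n // v ≠ u},
              ((∏ j : Fin L, wgt μ1 (f v' j)) * (1 - QL q b (f v')))
          = ∑ f ∈ Fintype.piFinset fun _ : {v : Fin n // v ≠ u} =>
                (Finset.univ : Finset (Fin L → Bool)),
              ∏ v' : {v : Fin n // v ≠ u},
                ((∏ j : Fin L, wgt μ1 (f v' j)) * (1 - QL q b (f v'))) := by
            rw [Fintype.piFinset_univ]
        _ = ∏ v' : {v : Fin n // v ≠ u}, ∑ c ∈ (Finset.univ : Finset (Fin L → Bool)),
              ((∏ j : Fin L, wgt μ1 (c j)) * (1 - QL q b c)) :=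
            (Finset.prod_univ_sum (fun _ => (Finset.univ : Finset (Fin L → Bool)))
              (fun _ c => (∏ j : Fin L, wgt μ1 (c j)) * (1 - QL q b c))).symm
        _ = ∏ v' : {v : Fin n // v ≠ u}, K := by
            refine Finset.prod_congr rfl fun v' _ => ?_
            rw [Finset.sum_congr rfl fun c _ => this c, Finset.sum_sub_distrib,
              sum_wgt_one, sum_wgt_QL, hK, hc]
        _ = K ^ (n - 1) := by rw [Finset.prod_const, Finset.card_univ, card_ne]
    · simp [hc]
  rw [Finset.sum_congr rfl fun b _ => hstep b]
  rw [← Finset.sum_filter]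
  have hconst : ∀ b ∈ Finset.univ.filter fun b : Fin L → Bool => cnt b = ℓ,
      (∏ j : Fin L, wgt μ1 (b j)) * K ^ (n - 1)
      = μ1 ^ ℓ * (1 - μ1) ^ (L - ℓ) * K ^ (n - 1) := by
    intro b hb
    have hc := (Finset.mem_filter.1 hb).2
    rw [prod_wgt, hc]
  rw [Finset.sum_congr rfl hconst, Finset.sum_const, card_cnt, nsmul_eq_mul]
  ring



lemma sect_meas {n : ℕ} (u : Fin n) (t : Fin n → ℝ) :
    MeasurableSet {U : Fin n × Fin n → ℝ | ∀ v, v ≠ u → t v < U (min u v, max u v)} := by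
  have h : {U : Fin n × Fin n → ℝ | ∀ v, v ≠ u → t v < U (min u v, max u v)}
      = ⋂ v : Fin n, {U : Fin n × Fin n → ℝ | v ≠ u → t v < U (min u v, max u v)} := by
    ext U; simp [Set.mem_iInter]
  rw [h]
  refine MeasurableSet.iInter fun v => ?_
  by_cases hv : v = u
  · have : {U : Fin n × Fin n → ℝ | v ≠ u → t v < U (min u v, max u v)} = Set.univ := by
      ext U; simp [hv]
    rw [this]; exact MeasurableSet.univ
  · have : {U : Fin n × Fin n → ℝ | v ≠ u → t v < U (min u v, max u v)}
        = (fun U : Fin n × Fin n → ℝ => U (min u v, max u v)) ⁻¹' Set.Ioi (t v) := by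
      ext U; simp [hv]
    rw [this]
    exact measurable_pi_apply _ measurableSet_Ioi

lemma event_eq {n L : ℕ} (q : Bool → Bool → ℝ) (u : Fin n) (ℓ : ℕ) :
    {ω : (Fin n → Fin L → Bool) × (Fin n × Fin n → ℝ) |
        Isolated q ω u ∧ Scount ω u = ℓ}
      = ⋃ a ∈ Finset.univ.filter (fun a : Fin n → Fin L → Bool => cnt (a u) = ℓ),
          (({a} : Set (Fin n → Fin L → Bool)) ×ˢ
            {U : Fin n × Fin n → ℝ | ∀ v, v ≠ u →
              QL q (a u) (a v) < U (min u v, max u v)}) := by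
  classical
  ext ω
  simp only [Set.mem_setOf_eq, Set.mem_iUnion, Finset.mem_filter, Finset.mem_univ, true_and,
    Set.mem_prod, Set.mem_singleton_iff, exists_prop]
  constructor
  · rintro ⟨hiso, hsc⟩
    refine ⟨ω.1, ?_, rfl, fun v hv => ?_⟩
    · rw [← hsc]; rfl
    · have h := hiso v
      rw [Adj] at h
      push_neg at h
      exact h (Ne.symm hv)
  · rintro ⟨a, hcnt, ha1, hS⟩
    subst ha1
    refine ⟨fun v => ?_, hcnt⟩
    rw [Adj]
    rintro ⟨huv, hle⟩
    exact absurd hle (not_le_of_gt (hS v (Ne.symm huv)))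

lemma isolated_prob (n L : ℕ) (μ1 : ℝ) (hμ0 : 0 < μ1) (hμ1 : μ1 < 1)
    (q : Bool → Bool → ℝ) (hq : ∀ a b, 0 < q a b ∧ q a b < 1) (u : Fin n) (ℓ : ℕ) :
    magMeasure n L μ1 {ω | Isolated q ω u ∧ Scount ω u = ℓ}
      = ENNReal.ofReal
          ((1 - Gam μ1 q true ^ ℓ * Gam μ1 q false ^ (L - ℓ)) ^ (n - 1) *
            (L.choose ℓ) * μ1 ^ ℓ * (1 - μ1) ^ (L - ℓ)) := by
  classical
  have hQL0 : ∀ a b : Fin L → Bool, 0 ≤ QL q a b := fun a b =>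
    Finset.prod_nonneg fun j _ => (hq _ _).1.le
  have hQL1 : ∀ a b : Fin L → Bool, QL q a b ≤ 1 := fun a b =>
    Finset.prod_le_one (fun j _ => (hq _ _).1.le) (fun j _ => (hq _ _).2.le)
  have hw : ∀ b : Bool, 0 ≤ wgt μ1 b := by
    intro b; cases b
    · rw [wgt_false]; linarith
    · rw [wgt_true]; exact hμ0.le
  set S : (Fin n → Fin L → Bool) → Set (Fin n × Fin n → ℝ) := fun a =>
    {U | ∀ v, v ≠ u → QL q (a u) (a v) < U (min u v, max u v)} with hSdef
  set A := Finset.univ.filter (fun a : Fin n → Fin L → Bool => cnt (a u) = ℓ) with hA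
  have hdisj : (↑A : Set (Fin n → Fin L → Bool)).PairwiseDisjoint
      (fun a => (({a} : Set (Fin n → Fin L → Bool)) ×ˢ S a)) := by
    intro a _ b _ hab
    refine Set.disjoint_left.2 ?_
    rintro ω ⟨h1, _⟩ ⟨h2, _⟩
    exact hab (h1.symm.trans h2)
  have hmeas : ∀ a ∈ A, MeasurableSet
      (({a} : Set (Fin n → Fin L → Bool)) ×ˢ S a) := fun a _ =>
    (measurableSet_singleton a).prod (sect_meas u _)
  rw [event_eq q u ℓ, magMeasure, measure_biUnion_finset hdisj hmeas]
  have hterm : ∀ a ∈ A,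
      ((Measure.pi fun _ : Fin n => Measure.pi fun _ : Fin L => bern μ1).prod
        (Measure.pi fun _ : Fin n × Fin n => unif01))
        (({a} : Set (Fin n → Fin L → Bool)) ×ˢ S a)
      = ENNReal.ofReal ((∏ v : Fin n, ∏ j : Fin L, wgt μ1 (a v j))
          * ∏ v ∈ Finset.univ.erase u, (1 - QL q (a u) (a v))) := by
    intro a _
    rw [Measure.prod_prod, attr_single, hSdef]
    rw [sect_measure u (fun v => QL q (a u) (a v)) (fun v => hQL0 _ _) (fun v => hQL1 _ _)]
    rw [ENNReal.ofReal_mul (Finset.prod_nonneg fun v _ =>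
      Finset.prod_nonneg fun j _ => hw _)]
    congr 1
    · rw [ENNReal.ofReal_prod_of_nonneg fun v _ => Finset.prod_nonneg fun j _ => hw _]
      exact Finset.prod_congr rfl fun v _ =>
        (ENNReal.ofReal_prod_of_nonneg fun j _ => hw _).symm
    · rw [ENNReal.ofReal_prod_of_nonneg fun v _ => by
        have := hQL1 (a u) (a v); linarith]
  rw [Finset.sum_congr rfl hterm, ← ENNReal.ofReal_sum_of_nonneg, hA, real_key]
  intro a _
  refine mul_nonneg (Finset.prod_nonneg fun v _ => Finset.prod_nonneg fun j _ => hw _)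
    (Finset.prod_nonneg fun v _ => ?_)
  have := hQL1 (a u) (a v); linarith


theorem mag_first_moment_refined_isolated
    (n L : ℕ) (hn : 2 ≤ n) (hL : 1 ≤ L)
    (μ1 : ℝ) (hμ1 : 0 < μ1) (hμ1' : μ1 < 1)
    (q : Bool → Bool → ℝ) (hq : ∀ a b, 0 < q a b ∧ q a b < 1)
    (hqsym : q false true = q true false)
    (u : Fin n) (ℓ : ℕ) (hℓ : ℓ ≤ L) :
    magMeasure n L μ1 {ω | Isolated q ω u ∧ Scount ω u = ℓ}
      = ENNReal.ofReal
          ((1 - Gam μ1 q true ^ ℓ * Gam μ1 q false ^ (L - ℓ)) ^ (n - 1) *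
            (L.choose ℓ) * μ1 ^ ℓ * (1 - μ1) ^ (L - ℓ)) ∧
    ∫ ω, (numIsolatedWith q ℓ ω : ℝ) ∂(magMeasure n L μ1)
      = n * ((1 - Gam μ1 q true ^ ℓ * Gam μ1 q false ^ (L - ℓ)) ^ (n - 1) *
          (L.choose ℓ) * μ1 ^ ℓ * (1 - μ1) ^ (L - ℓ)) := by
  classical
  have hΓ : ∀ a : Bool, 0 < Gam μ1 q a ∧ Gam μ1 q a ≤ 1 := by
    intro a
    have h1 := hq a false; have h2 := hq a true
    constructor
    · rw [Gam]; nlinarith [h1.1, h2.1]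
    · rw [Gam]; nlinarith [h1.2, h2.2]
  set C : ℝ := (1 - Gam μ1 q true ^ ℓ * Gam μ1 q false ^ (L - ℓ)) ^ (n - 1) *
      (L.choose ℓ) * μ1 ^ ℓ * (1 - μ1) ^ (L - ℓ) with hC
  have hK0 : 0 ≤ 1 - Gam μ1 q true ^ ℓ * Gam μ1 q false ^ (L - ℓ) := by
    have h1 : Gam μ1 q true ^ ℓ ≤ 1 := pow_le_one₀ (hΓ true).1.le (hΓ true).2
    have h2 : Gam μ1 q false ^ (L - ℓ) ≤ 1 := pow_le_one₀ (hΓ false).1.le (hΓ false).2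
    have h3 : 0 ≤ Gam μ1 q true ^ ℓ := pow_nonneg (hΓ true).1.le _
    have h4 : 0 ≤ Gam μ1 q false ^ (L - ℓ) := pow_nonneg (hΓ false).1.le _
    nlinarith
  have hCpos : 0 ≤ C := by
    refine mul_nonneg (mul_nonneg (mul_nonneg (pow_nonneg hK0 _) ?_) ?_) ?_
    · positivity
    · exact pow_nonneg hμ1.le _
    · exact pow_nonneg (by linarith) _
  refine ⟨isolated_prob n L μ1 hμ1 hμ1' q hq u ℓ, ?_⟩
  haveI : IsProbabilityMeasure (bern μ1) := ⟨bern_univ μ1 hμ1.le (by linarith)⟩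
  haveI : IsProbabilityMeasure (magMeasure n L μ1) := by
    unfold magMeasure; infer_instance
  have hmeasE : ∀ u' : Fin n, MeasurableSet {ω : (Fin n → Fin L → Bool) ×
      (Fin n × Fin n → ℝ) | Isolated q ω u' ∧ Scount ω u' = ℓ} := by
    intro u'
    rw [event_eq q u' ℓ]
    exact Finset.measurableSet_biUnion _ fun a _ =>
      (measurableSet_singleton a).prod (sect_meas u' _)
  have hprob : ∀ u' : Fin n,
      magMeasure n L μ1 {ω | Isolated q ω u' ∧ Scount ω u' = ℓ} = ENNReal.ofReal C :=
    fun u' => isolated_prob n L μ1 hμ1 hμ1' q hq u' ℓ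
  have hcast : ∀ ω : (Fin n → Fin L → Bool) × (Fin n × Fin n → ℝ),
      (numIsolatedWith q ℓ ω : ℝ)
      = ∑ u' : Fin n, Set.indicator
          {ω' : (Fin n → Fin L → Bool) × (Fin n × Fin n → ℝ) |
            Isolated q ω' u' ∧ Scount ω' u' = ℓ} (fun _ => (1:ℝ)) ω := by
    intro ω
    unfold numIsolatedWith
    rw [Finset.card_filter]
    push_cast
    refine Finset.sum_congr rfl fun u' _ => ?_
    by_cases h : Isolated q ω u' ∧ Scount ω u' = ℓ
    · rw [if_pos h]
      exact (Set.indicator_of_mem (show ω ∈ {ω' : (Fin n → Fin L → Bool) ×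
        (Fin n × Fin n → ℝ) | Isolated q ω' u' ∧ Scount ω' u' = ℓ} from h)
        (fun _ => (1:ℝ))).symm
    · rw [if_neg h]
      exact (Set.indicator_of_notMem (show ω ∉ {ω' : (Fin n → Fin L → Bool) ×
        (Fin n × Fin n → ℝ) | Isolated q ω' u' ∧ Scount ω' u' = ℓ} from h)
        (fun _ => (1:ℝ))).symm
  calc ∫ ω, (numIsolatedWith q ℓ ω : ℝ) ∂(magMeasure n L μ1)
      = ∫ ω, (∑ u' : Fin n, Set.indicator
          {ω' : (Fin n → Fin L → Bool) × (Fin n × Fin n → ℝ) |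
            Isolated q ω' u' ∧ Scount ω' u' = ℓ} (fun _ => (1:ℝ)) ω)
          ∂(magMeasure n L μ1) := integral_congr_ae (Filter.Eventually.of_forall hcast)
    _ = ∑ u' : Fin n, ∫ ω, Set.indicator
          {ω' : (Fin n → Fin L → Bool) × (Fin n × Fin n → ℝ) |
            Isolated q ω' u' ∧ Scount ω' u' = ℓ} (fun _ => (1:ℝ)) ω
          ∂(magMeasure n L μ1) :=
        integral_finset_sum _ fun u' _ => (integrable_const (1:ℝ)).indicator (hmeasE u')
    _ = ∑ u' : Fin n, C := by
        refine Finset.sum_congr rfl fun u' _ => ?_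
        rw [integral_indicator_const (1:ℝ) (hmeasE u'), measureReal_def, hprob u',
          ENNReal.toReal_ofReal hCpos, smul_eq_mul, mul_one]
    _ = n * C := by
        rw [Finset.sum_const, Finset.card_univ, Fintype.card_fin, nsmul_eq_mul]
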